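/- arXiv:1207.5548 — 6 statements merged into one kernel-verified Lean document; each statement's English description precedes it below -/
import Mathlib

section
/- For every real α, every natural number n and every real x, the n-th rising factorial of x satisfies the connection identity (x)_n = ∑_{k=0}^{n} S(n,k;α)·(x)_{k↑α}, where S(n,k;α) is the generalized Stirling number defined as a sum over compositions. -/
/-- Rising factorial `(x)_n = x(x+1)⋯(x+n−1)`. -/
noncomputable def risingFac (x : ℝ) (n : ℕ) : ℝ := ∏ i ∈ Finset.range n, (x + i)

/-- Rising factorial with increment `α`: `(x)_{n↑α} = ∏_{i<n} (x + iα)`. -/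
noncomputable def risingFacInc (x α : ℝ) (n : ℕ) : ℝ := ∏ i ∈ Finset.range n, (x + i * α)

/-- Falling factorial `(x)_{[n]} = x(x−1)⋯(x−n+1)`. -/
noncomputable def fallingFac (x : ℝ) (n : ℕ) : ℝ := ∏ i ∈ Finset.range n, (x - i)

/-- Compositions of `n` into `k` positive parts, as functions `Fin k → ℕ`. -/
def compositions (n k : ℕ) : Finset (Fin k → ℕ) :=
  (Fintype.piFinset fun _ => Finset.range (n + 1)).filter
    (fun f => (∀ i, 0 < f i) ∧ ∑ i, f i = n)

/-- Tuples of `k` nonnegative integers summing to `n`. -/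
def weakCompositions (n k : ℕ) : Finset (Fin k → ℕ) :=
  (Fintype.piFinset fun _ => Finset.range (n + 1)).filter (fun f => ∑ i, f i = n)

/-- Generalized (central) Stirling number
`S(n,k;α) = (n!/k!) ∑_{(n_1,…,n_k)} ∏_j (1−α)_{n_j−1}/n_j!`,
the sum over compositions of `n` into `k` positive parts. -/
noncomputable def genStirling (α : ℝ) (n k : ℕ) : ℝ :=
  (Nat.factorial n : ℝ) / (Nat.factorial k : ℝ) *
    ∑ f ∈ compositions n k, ∏ j, risingFac (1 - α) (f j - 1) / (Nat.factorial (f j) : ℝ)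

/-- Non-central generalized Stirling number
`S(n,k;α,γ) = ∑_{s=k}^n C(n,s) S(s,k;α) (−γ)_{n−s}`. -/
noncomputable def genStirlingNC (α γ : ℝ) (n k : ℕ) : ℝ :=
  ∑ s ∈ Finset.Icc k n, (n.choose s : ℝ) * genStirling α s k * risingFac (-γ) (n - s)

lemma mem_compositions' {n k : ℕ} {f : Fin k → ℕ} :
    f ∈ compositions n k ↔ (∀ i, 0 < f i) ∧ ∑ i, f i = n := by
  unfold compositions
  rw [Finset.mem_filter]
  constructor
  · rintro ⟨-, h⟩; exact h
  · rintro ⟨h1, h2⟩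
    refine ⟨?_, h1, h2⟩
    rw [Fintype.mem_piFinset]
    intro i
    rw [Finset.mem_range, Nat.lt_succ_iff, ← h2]
    exact Finset.single_le_sum (fun i _ => Nat.zero_le _) (Finset.mem_univ i)


noncomputable def aa (α : ℝ) (m : ℕ) : ℝ := risingFac (1 - α) (m - 1) / (Nat.factorial m : ℝ)

lemma aa_one (α : ℝ) : aa α 1 = 1 := by simp [aa, risingFac]

lemma aa_rec (α : ℝ) (m : ℕ) :
    ((m : ℝ) + 2) * aa α (m + 2) = ((m : ℝ) + 1 - α) * aa α (m + 1) := by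
  have hr : risingFac (1 - α) (m + 1) = risingFac (1 - α) m * (1 - α + m) := by
    rw [risingFac, Finset.prod_range_succ]; rfl
  have hf : ((m+1).factorial : ℝ) ≠ 0 := Nat.cast_ne_zero.2 (Nat.factorial_ne_zero _)
  have hf2 : ((m+2).factorial : ℝ) ≠ 0 := Nat.cast_ne_zero.2 (Nat.factorial_ne_zero _)
  have h2 : ((m+2).factorial : ℝ) = ((m:ℝ)+2) * ((m+1).factorial : ℝ) := by
    rw [Nat.factorial_succ]; push_cast; ring
  show ((m : ℝ) + 2) * (risingFac (1-α) (m + 2 - 1) / ((m+2).factorial : ℝ))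
      = ((m : ℝ) + 1 - α) * (risingFac (1-α) (m + 1 - 1) / ((m+1).factorial : ℝ))
  rw [show m + 2 - 1 = m + 1 from rfl, show m + 1 - 1 = m from rfl, hr, h2]
  field_simp
  ring

noncomputable def TT (α : ℝ) (n k : ℕ) : ℝ := ∑ f ∈ compositions n k, ∏ j, aa α (f j)

lemma key_step (α : ℝ) (n k : ℕ) (j : Fin (k+1)) :
    ∑ f ∈ compositions (n+1) (k+1), (f j : ℝ) * ∏ i, aa α (f i)
      = (∑ g ∈ compositions n (k+1), ((g j : ℝ) - α) * ∏ i, aa α (g i))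
        + ∑ h ∈ compositions n k, ∏ i, aa α (h i) := by
  classical
  rw [← Finset.sum_filter_add_sum_filter_not (compositions (n+1) (k+1)) (fun f => f j = 1),
      add_comm]
  congr 1
  · -- f j ≠ 1 case ↔ compositions n (k+1)
    refine Finset.sum_bij' (fun f _ => Function.update f j (f j - 1))
      (fun g _ => Function.update g j (g j + 1)) ?_ ?_ ?_ ?_ ?_
    · intro f hf
      beta_reduce
      rw [Finset.mem_filter] at hf
      obtain ⟨hf, hj1⟩ := hf
      obtain ⟨hpos, hsum⟩ := mem_compositions'.1 hf
      have h2 : 2 ≤ f j := by have := hpos j; omega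
      rw [mem_compositions']
      constructor
      · intro i
        rcases eq_or_ne i j with rfl | hij
        · rw [Function.update_self]; omega
        · rw [Function.update_of_ne hij]; exact hpos i
      · rw [Finset.sum_update_of_mem (Finset.mem_univ j)]
        have := Finset.add_sum_erase Finset.univ f (Finset.mem_univ j)
        rw [Finset.sdiff_singleton_eq_erase]
        omega
    · intro g hg
      beta_reduce
      obtain ⟨hpos, hsum⟩ := mem_compositions'.1 hg
      rw [Finset.mem_filter]
      constructor
      · rw [mem_compositions']
        constructor
        · intro i
          rcases eq_or_ne i j with rfl | hij
          · rw [Function.update_self]; omega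
          · rw [Function.update_of_ne hij]; exact hpos i
        · rw [Finset.sum_update_of_mem (Finset.mem_univ j)]
          have := Finset.add_sum_erase Finset.univ g (Finset.mem_univ j)
          rw [Finset.sdiff_singleton_eq_erase]
          omega
      · simp only [Function.update_self]
        have := hpos j; omega
    · intro f hf
      beta_reduce
      rw [Finset.mem_filter] at hf
      obtain ⟨hf, hj1⟩ := hf
      obtain ⟨hpos, hsum⟩ := mem_compositions'.1 hf
      funext i
      rcases eq_or_ne i j with rfl | hij
      · simp only [Function.update_self]
        have := hpos i; omega
      · simp only [Function.update_of_ne hij]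
    · intro g hg
      beta_reduce
      funext i
      rcases eq_or_ne i j with rfl | hij
      · simp only [Function.update_self]; omega
      · simp only [Function.update_of_ne hij]
    · intro f hf
      beta_reduce
      rw [Finset.mem_filter] at hf
      obtain ⟨hf, hj1⟩ := hf
      obtain ⟨hpos, hsum⟩ := mem_compositions'.1 hf
      have h2 : 2 ≤ f j := by have := hpos j; omega
      obtain ⟨m, hm⟩ : ∃ m, f j = m + 2 := ⟨f j - 2, by omega⟩
      have hprod : ∀ (F : Fin (k+1) → ℕ), ∏ i, aa α (F i)
          = aa α (F j) * ∏ i ∈ Finset.univ.erase j, aa α (F i) :=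
        fun F => (Finset.mul_prod_erase Finset.univ (fun i => aa α (F i))
          (Finset.mem_univ j)).symm
      rw [hprod f, hprod (Function.update f j (f j - 1))]
      have heq : ∏ i ∈ Finset.univ.erase j, aa α (Function.update f j (f j - 1) i)
          = ∏ i ∈ Finset.univ.erase j, aa α (f i) := by
        refine Finset.prod_congr rfl fun i hi => ?_
        rw [Function.update_of_ne (Finset.ne_of_mem_erase hi)]
      rw [heq, Function.update_self, hm, show m + 2 - 1 = m + 1 from rfl]
      have h := aa_rec α m
      push_cast
      linear_combination (∏ i ∈ Finset.univ.erase j, aa α (f i)) * h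
  · -- f j = 1 case ↔ compositions n k
    refine Finset.sum_bij' (fun f _ => f ∘ j.succAbove)
      (fun h _ => j.insertNth 1 h) ?_ ?_ ?_ ?_ ?_
    · intro f hf
      beta_reduce
      rw [Finset.mem_filter] at hf
      obtain ⟨hf, hj1⟩ := hf
      obtain ⟨hpos, hsum⟩ := mem_compositions'.1 hf
      rw [mem_compositions']
      refine ⟨fun i => hpos _, ?_⟩
      rw [Fin.sum_univ_succAbove f j] at hsum
      simp only [Function.comp]
      omega
    · intro h hh
      beta_reduce
      obtain ⟨hpos, hsum⟩ := mem_compositions'.1 hh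
      rw [Finset.mem_filter]
      refine ⟨mem_compositions'.2 ⟨?_, ?_⟩, ?_⟩
      · intro i
        rcases eq_or_ne i j with rfl | hij
        · rw [Fin.insertNth_apply_same]; norm_num
        · obtain ⟨z, hz⟩ := Fin.exists_succAbove_eq hij
          rw [← hz, Fin.insertNth_apply_succAbove]
          exact hpos z
      · rw [Fin.sum_univ_succAbove _ j, Fin.insertNth_apply_same]
        simp only [Fin.insertNth_apply_succAbove]
        omega
      · simp [Fin.insertNth_apply_same]
    · intro f hf
      beta_reduce
      rw [Finset.mem_filter] at hf
      obtain ⟨-, hj1⟩ := hf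
      funext i
      rcases eq_or_ne i j with rfl | hij
      · rw [Fin.insertNth_apply_same]; exact hj1.symm
      · obtain ⟨z, hz⟩ := Fin.exists_succAbove_eq hij
        rw [← hz, Fin.insertNth_apply_succAbove]
        rfl
    · intro h hh
      beta_reduce
      funext i
      simp [Function.comp, Fin.insertNth_apply_succAbove]
    · intro f hf
      beta_reduce
      rw [Finset.mem_filter] at hf
      obtain ⟨-, hj1⟩ := hf
      rw [Fin.prod_univ_succAbove (fun i => aa α (f i)) j, hj1, aa_one, one_mul]
      simp [Function.comp]

lemma TT_rec (α : ℝ) (n k : ℕ) :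
    ((n:ℝ)+1) * TT α (n+1) (k+1)
      = ((n:ℝ) - ((k:ℝ)+1)*α) * TT α n (k+1) + ((k:ℝ)+1) * TT α n k := by
  classical
  have step1 : ((n:ℝ)+1) * TT α (n+1) (k+1)
      = ∑ f ∈ compositions (n+1) (k+1), ∑ j, (f j : ℝ) * ∏ i, aa α (f i) := by
    rw [TT, Finset.mul_sum]
    refine Finset.sum_congr rfl fun f hf => ?_
    obtain ⟨-, hsum⟩ := mem_compositions'.1 hf
    rw [← Finset.sum_mul]
    congr 1
    have : ((∑ i, f i : ℕ) : ℝ) = ∑ i, (f i : ℝ) := by push_cast; rfl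
    rw [← this, hsum]; push_cast; ring
  rw [step1, Finset.sum_comm]
  have step3 : ∀ j : Fin (k+1), ∑ f ∈ compositions (n+1) (k+1), (f j : ℝ) * ∏ i, aa α (f i)
      = (∑ g ∈ compositions n (k+1), ((g j : ℝ) - α) * ∏ i, aa α (g i)) + TT α n k :=
    fun j => key_step α n k j
  calc ∑ j : Fin (k+1), ∑ f ∈ compositions (n+1) (k+1), (f j : ℝ) * ∏ i, aa α (f i)
      = ∑ j : Fin (k+1), ((∑ g ∈ compositions n (k+1), ((g j : ℝ) - α) * ∏ i, aa α (g i))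
          + TT α n k) := Finset.sum_congr rfl fun j _ => step3 j
    _ = (∑ j : Fin (k+1), ∑ g ∈ compositions n (k+1), ((g j : ℝ) - α) * ∏ i, aa α (g i))
          + ((k:ℝ)+1) * TT α n k := by
        rw [Finset.sum_add_distrib, Finset.sum_const, Finset.card_univ, Fintype.card_fin,
          nsmul_eq_mul]
        push_cast; ring
    _ = ((n:ℝ) - ((k:ℝ)+1)*α) * TT α n (k+1) + ((k:ℝ)+1) * TT α n k := by
        congr 1
        rw [Finset.sum_comm, TT, Finset.mul_sum]
        refine Finset.sum_congr rfl fun g hg => ?_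
        obtain ⟨-, hsum⟩ := mem_compositions'.1 hg
        rw [← Finset.sum_mul]
        congr 1
        rw [Finset.sum_sub_distrib, Finset.sum_const, Finset.card_univ, Fintype.card_fin,
          nsmul_eq_mul]
        have : (∑ i, (g i : ℝ)) = ((n:ℕ):ℝ) := by rw [← hsum]; push_cast; rfl
        rw [this]; push_cast; ring

lemma genStirling_eq (α : ℝ) (n k : ℕ) :
    genStirling α n k = (Nat.factorial n : ℝ) / (Nat.factorial k : ℝ) * TT α n k := rfl


lemma compositions_succ_zero (n : ℕ) : compositions (n+1) 0 = ∅ := by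
  ext f
  simp only [Finset.notMem_empty, iff_false, mem_compositions']
  rintro ⟨-, h⟩
  simp at h

lemma compositions_of_lt {n k : ℕ} (h : n < k) : compositions n k = ∅ := by
  ext f
  simp only [Finset.notMem_empty, iff_false, mem_compositions']
  rintro ⟨hpos, hsum⟩
  have : (k : ℕ) ≤ ∑ i, f i := by
    calc k = ∑ _i : Fin k, 1 := by simp
    _ ≤ ∑ i, f i := Finset.sum_le_sum fun i _ => hpos i
  omega

lemma genStirling_succ_zero (α : ℝ) (n : ℕ) : genStirling α (n+1) 0 = 0 := by
  rw [genStirling_eq, TT, compositions_succ_zero]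
  simp

lemma genStirling_of_lt (α : ℝ) {n k : ℕ} (h : n < k) : genStirling α n k = 0 := by
  rw [genStirling_eq, TT, compositions_of_lt h]
  simp

lemma genStirling_zero_zero (α : ℝ) : genStirling α 0 0 = 1 := by
  have hc : compositions 0 0 = {fun _ => 0} := by
    ext f
    simp only [mem_compositions', Finset.mem_singleton]
    constructor
    · intro; exact funext fun i => absurd i.2 (by omega)
    · intro hf
      exact ⟨fun i => absurd i.2 (by omega), by simp⟩
  rw [genStirling, hc]
  simp

lemma genStirling_rec (α : ℝ) (n k : ℕ) :
    genStirling α (n+1) (k+1)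
      = ((n:ℝ) - ((k:ℝ)+1)*α) * genStirling α n (k+1) + genStirling α n k := by
  have h := TT_rec α n k
  rw [genStirling_eq, genStirling_eq, genStirling_eq]
  have hn : ((n+1).factorial : ℝ) = ((n:ℝ)+1) * (n.factorial : ℝ) := by
    rw [Nat.factorial_succ]; push_cast; ring
  have hk : ((k+1).factorial : ℝ) = ((k:ℝ)+1) * (k.factorial : ℝ) := by
    rw [Nat.factorial_succ]; push_cast; ring
  have hkf : (k.factorial : ℝ) ≠ 0 := Nat.cast_ne_zero.2 (Nat.factorial_ne_zero _)
  have hk1 : ((k:ℝ)+1) ≠ 0 := by positivity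
  have hn1 : ((n:ℝ)+1) ≠ 0 := by positivity
  rw [hn, hk]
  field_simp
  linear_combination h

lemma risingFac_succ (x : ℝ) (n : ℕ) : risingFac x (n+1) = risingFac x n * (x + n) := by
  rw [risingFac, Finset.prod_range_succ]; rfl

lemma risingFacInc_succ (x α : ℝ) (k : ℕ) :
    risingFacInc x α (k+1) = risingFacInc x α k * (x + k * α) := by
  rw [risingFacInc, Finset.prod_range_succ]; rfl


/-- Connection identity `(x)_n = ∑_{k≤n} S(n,k;α) (x)_{k↑α}`. -/
theorem rising_eq_sum_genStirling_risingFacInc (α : ℝ) (n : ℕ) (x : ℝ) :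
    risingFac x n = ∑ k ∈ Finset.range (n + 1), genStirling α n k * risingFacInc x α k := by
  induction n with
  | zero =>
    simp [risingFac, risingFacInc, genStirling_zero_zero]
  | succ n ih =>
    rw [risingFac_succ, ih, Finset.sum_mul]
    have hterm : ∀ k : ℕ, genStirling α n k * risingFacInc x α k * (x + n)
        = genStirling α n k * risingFacInc x α (k+1)
          + ((n:ℝ) - (k:ℝ) * α) * genStirling α n k * risingFacInc x α k := by
      intro k; rw [risingFacInc_succ]; ring
    rw [Finset.sum_congr rfl (fun k _ => hterm k), Finset.sum_add_distrib]
    rw [Finset.sum_range_succ' (fun k => genStirling α (n+1) k * risingFacInc x α k) (n+1)]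
    rw [genStirling_succ_zero, zero_mul, add_zero]
    have hrec : ∀ k : ℕ, genStirling α (n+1) (k+1) * risingFacInc x α (k+1)
        = (((n:ℝ) - ((k:ℝ)+1) * α) * genStirling α n (k+1)) * risingFacInc x α (k+1)
          + genStirling α n k * risingFacInc x α (k+1) := by
      intro k; rw [genStirling_rec]; ring
    rw [Finset.sum_congr rfl (fun k _ => hrec k), Finset.sum_add_distrib, add_comm]
    congr 1
    rw [Finset.sum_range_succ'
      (fun k => ((n:ℝ) - (k:ℝ) * α) * genStirling α n k * risingFacInc x α k) n]
    have hzero : ((n:ℝ) - (0:ℕ) * α) * genStirling α n 0 * risingFacInc x α 0 = 0 := by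
      cases n with
      | zero => simp
      | succ m => rw [genStirling_succ_zero]; ring
    rw [hzero, add_zero]
    rw [Finset.sum_range_succ
      (fun k => (((n:ℝ) - ((k:ℝ)+1) * α) * genStirling α n (k+1)) * risingFacInc x α (k+1)) n]
    rw [genStirling_of_lt α (Nat.lt_succ_self n)]
    rw [mul_zero, zero_mul, add_zero]
    refine Finset.sum_congr rfl fun k _ => ?_
    push_cast
    ring
end

section
/- Let α < 1 be real, let V(n,k) be an arbitrary array of real weights, let n ≥ 1 and let r, k be integers with 1 ≤ r ≤ k ≤ n. Let n_1,…,n_r be positive integers with N = n_1+⋯+n_r ≤ n and k − r ≤ n − N. Then the r-dimensional marginal of the multivariate Gibbs distribution satisfies: ∑ p(n_1,…,n_k) = [n!/(n_1!⋯n_r!·(n−N)!)]·[∏_{j=1}^{r} (1−α)_{n_j−1}]·(V(n,k)·(k−r)!/k!)·S(n−N, k−r; α), where the sum ranges over all tuples (n_{r+1},…,n_k) of positive integers with ∑_{j=r+1}^{k} n_j = n − N. -/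
/-- The multivariate Gibbs distribution of parameters `(n, α, V)`:
`p(n_1,…,n_k) = n!/(n_1!⋯n_k!·k!) · V(n,k) · ∏_j (1−α)_{n_j−1}`. -/
noncomputable def gibbsWeight (α : ℝ) (V : ℕ → ℕ → ℝ) (n k : ℕ) (f : Fin k → ℕ) : ℝ :=
  (Nat.factorial n : ℝ) / ((∏ j, (Nat.factorial (f j) : ℝ)) * (Nat.factorial k : ℝ)) *
    V n k * ∏ j, risingFac (1 - α) (f j - 1)


lemma prod_append_cast {M : Type*} [CommMonoid M] {r s k : ℕ} (e : k = r + s)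
    (a : Fin r → ℕ) (b : Fin s → ℕ) (F : ℕ → M) :
    ∏ i : Fin k, F (Fin.append a b (Fin.cast e i)) =
      (∏ i, F (a i)) * ∏ i, F (b i) := by
  rw [← Equiv.prod_comp (finCongr e.symm) (fun i => F (Fin.append a b (Fin.cast e i)))]
  simp only [finCongr_apply, Fin.cast_cast, Fin.cast_eq_self]
  rw [Fin.prod_univ_add]
  simp [Fin.append_left, Fin.append_right]

/-- The `r`-dimensional marginal of the multivariate Gibbs distribution. -/
theorem gibbs_marginal (α : ℝ) (hα : α < 1) (V : ℕ → ℕ → ℝ) (n r k : ℕ)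
    (hn : 1 ≤ n) (hr : 1 ≤ r) (hrk : r ≤ k) (hkn : k ≤ n)
    (nv : Fin r → ℕ) (hnv : ∀ i, 0 < nv i) (hN : ∑ i, nv i ≤ n)
    (hkr : k - r ≤ n - ∑ i, nv i) :
    ∑ g ∈ compositions (n - ∑ i, nv i) (k - r),
        gibbsWeight α V n k
          (fun i => Fin.append nv g (Fin.cast (show k = r + (k - r) by omega) i)) =
      (Nat.factorial n : ℝ) /
          ((∏ i, (Nat.factorial (nv i) : ℝ)) * (Nat.factorial (n - ∑ i, nv i) : ℝ)) *
        (∏ i, risingFac (1 - α) (nv i - 1)) *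
        (V n k * (Nat.factorial (k - r) : ℝ) / (Nat.factorial k : ℝ)) *
        genStirling α (n - ∑ i, nv i) (k - r) := by
  have hA : (∏ i, (Nat.factorial (nv i) : ℝ)) ≠ 0 := by
    apply Finset.prod_ne_zero_iff.mpr
    intro i _; exact_mod_cast (Nat.factorial_ne_zero _)
  have hk : ((Nat.factorial k : ℝ)) ≠ 0 := by exact_mod_cast Nat.factorial_ne_zero _
  have hkr' : ((Nat.factorial (k - r) : ℝ)) ≠ 0 := by exact_mod_cast Nat.factorial_ne_zero _
  have hm : ((Nat.factorial (n - ∑ i, nv i) : ℝ)) ≠ 0 := by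
    exact_mod_cast Nat.factorial_ne_zero _
  have key : ∀ g ∈ compositions (n - ∑ i, nv i) (k - r),
      gibbsWeight α V n k
          (fun i => Fin.append nv g (Fin.cast (show k = r + (k - r) by omega) i)) =
        ((Nat.factorial n : ℝ) / (∏ i, (Nat.factorial (nv i) : ℝ)) *
          (∏ i, risingFac (1 - α) (nv i - 1)) * V n k / (Nat.factorial k : ℝ)) *
          ∏ j, risingFac (1 - α) (g j - 1) / (Nat.factorial (g j) : ℝ) := by
    intro g hg
    have hB : (∏ j, (Nat.factorial (g j) : ℝ)) ≠ 0 := by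
      apply Finset.prod_ne_zero_iff.mpr
      intro i _; exact_mod_cast (Nat.factorial_ne_zero _)
    unfold gibbsWeight
    rw [prod_append_cast _ nv g (fun x => (Nat.factorial x : ℝ)),
        prod_append_cast _ nv g (fun x => risingFac (1 - α) (x - 1)),
        Finset.prod_div_distrib]
    field_simp
  rw [Finset.sum_congr rfl key, ← Finset.mul_sum, genStirling]
  field_simp
end

section
/- For every real α and integers 1 ≤ k ≤ n, one has ∑_{n_1=1}^{n−k+1} n_1·binom(n,n_1)·(1−α)_{n_1−1}·S(n−n_1, k−1; α) = n·S(n−1, k−1; α, −(1−α)). (This is the identity underlying the formula E(N_1 | K_n = k) = (n/k)·S(n−1,k−1;α,−(1−α))/S(n,k;α) for the expected size of the first block given k blocks under any Gibbs partition model.) -/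
/-- The identity underlying `E(N_1 | K_n = k) = (n/k)·S(n−1,k−1;α,−(1−α))/S(n,k;α)`:
`∑_{n_1=1}^{n−k+1} n_1 C(n,n_1) (1−α)_{n_1−1} S(n−n_1,k−1;α) = n·S(n−1,k−1;α,−(1−α))`. -/
theorem sum_firstBlock_genStirling (α : ℝ) (n k : ℕ) (hk : 1 ≤ k) (hkn : k ≤ n) :
    ∑ n1 ∈ Finset.Icc 1 (n - k + 1),
        (n1 : ℝ) * (n.choose n1 : ℝ) * risingFac (1 - α) (n1 - 1) *
          genStirling α (n - n1) (k - 1) =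
      (n : ℝ) * genStirlingNC α (-(1 - α)) (n - 1) (k - 1) := by
  rw [genStirlingNC, Finset.mul_sum]
  refine Finset.sum_nbij' (fun n1 => n - n1) (fun s => n - s) ?_ ?_ ?_ ?_ ?_ <;>
    intro a ha <;> simp only [Finset.mem_Icc] at ha ⊢
  · omega
  · omega
  · show n - (n - a) = a; omega
  · show n - (n - a) = a; omega
  · have h1 : 1 ≤ a := ha.1
    have h2 : a ≤ n := by omega
    have hc : (n : ℝ) * ((n-1).choose (n - a) : ℝ) = (a : ℝ) * (n.choose a : ℝ) := by
      have hsym : (n-1).choose (n - a) = (n-1).choose (a - 1) := by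
        rw [← Nat.choose_symm (by omega : a - 1 ≤ n - 1)]
        congr 1; omega
      have heq := Nat.add_one_mul_choose_eq (n - 1) (a - 1)
      rw [show n - 1 + 1 = n by omega, show a - 1 + 1 = a by omega] at heq
      have hcn : n * (n-1).choose (n - a) = a * n.choose a := by
        rw [hsym, heq, Nat.mul_comm]
      exact_mod_cast hcn
    have harg : n - 1 - (n - a) = a - 1 := by omega
    rw [harg, neg_neg]
    linear_combination -(risingFac (1 - α) (a-1) * genStirling α (n-a) (k-1)) * hc
end

section
/- Let α < 1 be real, let V(n,k) be an arbitrary array of real weights, let n ≥ 1, and let r_1,…,r_n be nonnegative integers with R = ∑_{l=1}^{n} l·r_l ≤ n; put ρ = ∑_{l=1}^{n} r_l. Then the joint falling factorial moments of the Gibbs sampling formula satisfy: ∑ [∏_{l=1}^{n} (c_l)_{[r_l]}]·G(c) = (n!/∏_{l=1}^{n}(l!)^{r_l})·(∏_{l=1}^{n} [(1−α)_{l−1}]^{r_l}/(n−R)!)·∑_{k=ρ}^{ρ+n−R} V(n,k)·S(n−R, k−ρ; α), where the outer sum ranges over all tuples (c_1,…,c_n) of nonnegative integers with ∑_{i=1}^{n}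 i·c_i = n. -/
/-- Count vectors `(c_1,…,c_n)` with `∑ i·c_i = n`, encoded as `c : Fin n → ℕ`
where index `i` represents size `i+1`. -/
def countVectors (n : ℕ) : Finset (Fin n → ℕ) :=
  (Fintype.piFinset fun _ => Finset.range (n + 1)).filter
    (fun c => ∑ i, (i.1 + 1) * c i = n)

/-- The Gibbs sampling formula
`G(c) = n!·V(n,k)·∏_i [(1−α)_{i−1}]^{c_i}/((i!)^{c_i} c_i!)`, `k = ∑ c_i`. -/
noncomputable def gibbsSampling (α : ℝ) (V : ℕ → ℕ → ℝ) (n : ℕ) (c : Fin n → ℕ) : ℝ :=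
  (Nat.factorial n : ℝ) * V n (∑ i, c i) *
    ∏ i, (risingFac (1 - α) i.1) ^ (c i) /
      ((Nat.factorial (i.1 + 1) : ℝ) ^ (c i) * (Nat.factorial (c i) : ℝ))

open Finset Polynomial

lemma genStirling_eq_s6 (α : ℝ) {n m : ℕ} (hn : 1 ≤ n) (hm : m ≤ n) (j : ℕ) :
    genStirling α m j = (m.factorial : ℝ) *
      ∑ d ∈ ((Fintype.piFinset fun _ : Fin n => Finset.range (n + 1)).filter
          (fun d => ∑ i, (i.1 + 1) * d i = m ∧ ∑ i, d i = j)),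
        ∏ l : Fin n, (risingFac (1 - α) l.1) ^ (d l) /
          ((Nat.factorial (l.1 + 1) : ℝ) ^ (d l) * (Nat.factorial (d l) : ℝ)) := by
  classical
  set w : Fin n → ℝ := fun l => risingFac (1 - α) l.1 / ((l.1 + 1).factorial : ℝ) with hw
  set P : Polynomial ℝ := ∑ l : Fin n, Polynomial.C (w l) * Polynomial.X ^ (l.1 + 1) with hP
  -- coefficient via expansion over functions
  have hA : (P ^ j).coeff m =
      ∑ g ∈ (Fintype.piFinset fun _ : Fin j => (Finset.univ : Finset (Fin n))).filter
        (fun g => m = ∑ i, ((g i).1 + 1)), ∏ i, w (g i) := by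
    have hexp : P ^ j = ∑ g ∈ Fintype.piFinset (fun _ : Fin j => (Finset.univ : Finset (Fin n))),
        Polynomial.C (∏ i, w (g i)) * Polynomial.X ^ (∑ i, ((g i).1 + 1)) := by
      calc P ^ j = ∏ _i : Fin j, P := by
            rw [Finset.prod_const, Finset.card_univ, Fintype.card_fin]
        _ = _ := by
            rw [hP, Finset.prod_univ_sum]
            refine Finset.sum_congr rfl fun g _ => ?_
            rw [Finset.prod_mul_distrib, ← map_prod, Finset.prod_pow_eq_pow_sum]
    rw [hexp, Polynomial.finset_sum_coeff]
    simp_rw [Polynomial.coeff_C_mul, Polynomial.coeff_X_pow, mul_ite, mul_one, mul_zero]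
    rw [Finset.sum_filter]
  -- coefficient via multinomial theorem
  have hB : (P ^ j).coeff m =
      ∑ d ∈ (Finset.piAntidiag (Finset.univ : Finset (Fin n)) j).filter
        (fun d => ∑ l, (l.1 + 1) * d l = m),
        (Nat.multinomial Finset.univ d : ℝ) * ∏ l, w l ^ d l := by
    have hexp : P ^ j = ∑ d ∈ Finset.piAntidiag (Finset.univ : Finset (Fin n)) j,
        Polynomial.C ((Nat.multinomial Finset.univ d : ℝ) * ∏ l, w l ^ d l) *
          Polynomial.X ^ (∑ l, (l.1 + 1) * d l) := by
      rw [hP, Finset.sum_pow_eq_sum_piAntidiag]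
      refine Finset.sum_congr rfl fun d _ => ?_
      simp_rw [mul_pow, ← Polynomial.C_pow, Finset.prod_mul_distrib, ← map_prod, ← pow_mul,
        Finset.prod_pow_eq_pow_sum, map_mul, ← mul_assoc, Polynomial.C_eq_natCast]
    rw [hexp, Polynomial.finset_sum_coeff]
    simp_rw [Polynomial.coeff_C_mul, Polynomial.coeff_X_pow, mul_ite, mul_one, mul_zero]
    rw [Finset.sum_filter]
    refine Finset.sum_congr rfl fun d _ => ?_
    by_cases h : ∑ l, (l.1 + 1) * d l = m
    · rw [if_pos h.symm, if_pos h]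
    · rw [if_neg (fun hh => h hh.symm), if_neg h]
  -- compositions side equals the hA sum
  have hcomp : ∑ f ∈ compositions m j, ∏ i, risingFac (1 - α) (f i - 1) / ((f i).factorial : ℝ)
      = ∑ g ∈ (Fintype.piFinset fun _ : Fin j => (Finset.univ : Finset (Fin n))).filter
        (fun g => m = ∑ i, ((g i).1 + 1)), ∏ i, w (g i) := by
    have hfb : ∀ f : Fin j → ℕ, f ∈ compositions m j → ∀ i, f i - 1 < n := by
      intro f hf i
      obtain ⟨-, hpos, hsum⟩ := Finset.mem_filter.1 hf
      have hle : f i ≤ m := hsum ▸ Finset.single_le_sum (f := f)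
        (fun i _ => Nat.zero_le _) (Finset.mem_univ i)
      have := hpos i
      omega
    refine Finset.sum_bij' (fun f hf i => (⟨f i - 1, hfb f hf i⟩ : Fin n))
      (fun g _ i => (g i).1 + 1) ?_ ?_ ?_ ?_ ?_
    · intro f hf
      obtain ⟨-, hpos, hsum⟩ := Finset.mem_filter.1 hf
      refine Finset.mem_filter.2 ⟨by simp [Fintype.mem_piFinset], ?_⟩
      have h2 : (∑ i, ((f i - 1) + 1)) = m := by
        rw [← hsum]
        exact Finset.sum_congr rfl fun i _ => by have := hpos i; omega
      simpa using h2.symm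
    · intro g hg
      obtain ⟨-, hsum⟩ := Finset.mem_filter.1 hg
      refine Finset.mem_filter.2 ⟨?_, fun i => Nat.succ_pos _, hsum.symm⟩
      rw [Fintype.mem_piFinset]
      intro i
      rw [Finset.mem_range]
      have h3 : (g i).1 + 1 ≤ ∑ i', ((g i').1 + 1) :=
        Finset.single_le_sum (f := fun i' => (g i').1 + 1)
          (fun _ _ => Nat.zero_le _) (Finset.mem_univ i)
      show (g i).1 + 1 < m + 1
      omega
    · intro f hf
      obtain ⟨-, hpos, -⟩ := Finset.mem_filter.1 hf
      funext i
      have := hpos i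
      simp only
      omega
    · intro g hg
      funext i
      apply Fin.ext
      simp
    · intro f hf
      obtain ⟨-, hpos, -⟩ := Finset.mem_filter.1 hf
      refine Finset.prod_congr rfl fun i _ => ?_
      have h1 : f i - 1 + 1 = f i := by have := hpos i; omega
      rw [hw]
      simp only [h1]
  -- set equality between the two d-index sets
  have hset : (Finset.piAntidiag (Finset.univ : Finset (Fin n)) j).filter
        (fun d => ∑ l, (l.1 + 1) * d l = m)
      = (Fintype.piFinset fun _ : Fin n => Finset.range (n + 1)).filter
          (fun d => ∑ i, (i.1 + 1) * d i = m ∧ ∑ i, d i = j) := by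
    ext d
    simp only [Finset.mem_filter, Finset.mem_piAntidiag, Fintype.mem_piFinset, Finset.mem_range]
    constructor
    · rintro ⟨⟨hsum, -⟩, hwt⟩
      refine ⟨fun i => ?_, hwt, hsum⟩
      have h1 : (i.1 + 1) * d i ≤ ∑ l, (l.1 + 1) * d l :=
        Finset.single_le_sum (f := fun l => (l.1 + 1) * d l)
          (fun _ _ => Nat.zero_le _) (Finset.mem_univ i)
      have h2 : d i ≤ (i.1 + 1) * d i := Nat.le_mul_of_pos_left _ (Nat.succ_pos _)
      omega
    · rintro ⟨hb, hwt, hsum⟩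
      exact ⟨⟨hsum, fun i _ => Finset.mem_univ i⟩, hwt⟩
  rw [genStirling, hcomp, ← hA, hB, hset, Finset.mul_sum, Finset.mul_sum]
  refine Finset.sum_congr rfl fun d hd => ?_
  obtain ⟨-, hwt, hsum⟩ := Finset.mem_filter.1 hd
  have hspec : (∏ l, ((d l).factorial : ℝ)) * (Nat.multinomial Finset.univ d : ℝ)
      = (j.factorial : ℝ) := by
    rw [← Nat.cast_prod, ← Nat.cast_mul, Nat.multinomial_spec, hsum]
  have hjf : (j.factorial : ℝ) ≠ 0 := Nat.cast_ne_zero.2 (Nat.factorial_ne_zero _)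
  have hpf : (∏ l, ((d l).factorial : ℝ)) ≠ 0 :=
    Finset.prod_ne_zero_iff.2 fun _ _ => Nat.cast_ne_zero.2 (Nat.factorial_ne_zero _)
  have htgt : ∏ l : Fin n, (risingFac (1 - α) l.1) ^ (d l) /
        ((Nat.factorial (l.1 + 1) : ℝ) ^ (d l) * (Nat.factorial (d l) : ℝ))
      = (∏ l, w l ^ d l) / (∏ l, ((d l).factorial : ℝ)) := by
    rw [← Finset.prod_div_distrib]
    refine Finset.prod_congr rfl fun l _ => ?_
    rw [hw]
    simp only
    rw [div_pow, div_div]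
  rw [htgt]
  field_simp
  linear_combination (∏ l, w l ^ d l) * hspec


lemma fallingFac_natCast (c r : ℕ) : fallingFac (c : ℝ) r = (c.descFactorial r : ℝ) := by
  rcases le_or_gt r c with h | h
  · rw [Nat.descFactorial_eq_prod_range, Nat.cast_prod, fallingFac]
    refine Finset.prod_congr rfl fun i hi => ?_
    rw [Nat.cast_sub (le_of_lt (lt_of_lt_of_le (Finset.mem_range.1 hi) h))]
  · rw [Nat.descFactorial_eq_zero_iff_lt.2 h, Nat.cast_zero, fallingFac]
    exact Finset.prod_eq_zero (Finset.mem_range.2 h) (by simp)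

lemma fallingFac_zero_of_lt {c r : ℕ} (h : c < r) : fallingFac (c : ℝ) r = 0 := by
  rw [fallingFac_natCast, Nat.descFactorial_eq_zero_iff_lt.2 h, Nat.cast_zero]

lemma term_combine (x K : ℝ) (hK : K ≠ 0) (d r : ℕ) :
    fallingFac ((d + r : ℕ) : ℝ) r * (x ^ (d + r) / (K ^ (d + r) * ((d + r).factorial : ℝ)))
      = (x ^ r / K ^ r) * (x ^ d / (K ^ d * (d.factorial : ℝ))) := by
  rw [fallingFac_natCast]
  have h : ((d + r).descFactorial r : ℝ) * (d.factorial : ℝ) = ((d + r).factorial : ℝ) := by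
    rw [← Nat.cast_mul, mul_comm]
    norm_cast
    have := Nat.factorial_mul_descFactorial (show r ≤ d + r by omega)
    simpa using this
  have h1 : ((d + r).factorial : ℝ) ≠ 0 := Nat.cast_ne_zero.2 (Nat.factorial_ne_zero _)
  have h2 : (d.factorial : ℝ) ≠ 0 := Nat.cast_ne_zero.2 (Nat.factorial_ne_zero _)
  field_simp
  rw [pow_add, pow_add]
  linear_combination (x ^ r * x ^ d * K ^ d * K ^ r) * h

/-- Joint falling factorial moments of the Gibbs sampling formula. -/
theorem gibbsSampling_joint_fallingFactorial_moments (α : ℝ) (hα : α < 1)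
    (V : ℕ → ℕ → ℝ) (n : ℕ) (hn : 1 ≤ n) (r : Fin n → ℕ)
    (hR : ∑ l, (l.1 + 1) * r l ≤ n) :
    ∑ c ∈ countVectors n, (∏ l, fallingFac (c l : ℝ) (r l)) * gibbsSampling α V n c =
      (Nat.factorial n : ℝ) / (∏ l, (Nat.factorial (l.1 + 1) : ℝ) ^ (r l)) *
        ((∏ l, (risingFac (1 - α) l.1) ^ (r l)) /
          (Nat.factorial (n - ∑ l, (l.1 + 1) * r l) : ℝ)) *
        ∑ k ∈ Finset.Icc (∑ l, r l) (∑ l, r l + (n - ∑ l, (l.1 + 1) * r l)),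
          V n k * genStirling α (n - ∑ l, (l.1 + 1) * r l) (k - ∑ l, r l) := by
  classical
  set m := n - ∑ l, (l.1 + 1) * r l with hm
  have hmn : m ≤ n := Nat.sub_le _ _
  set ρ := ∑ l, r l with hρ
  set D : Finset (Fin n → ℕ) := (Fintype.piFinset fun _ : Fin n => Finset.range (n + 1)).filter
      (fun d => ∑ i, (i.1 + 1) * d i = m) with hD
  -- Step 1: restrict to c ≥ r
  have step1 : ∑ c ∈ countVectors n, (∏ l, fallingFac (c l : ℝ) (r l)) * gibbsSampling α V n c
      = ∑ c ∈ (countVectors n).filter (fun c => ∀ l, r l ≤ c l),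
          (∏ l, fallingFac (c l : ℝ) (r l)) * gibbsSampling α V n c := by
    refine (Finset.sum_filter_of_ne ?_).symm
    intro c _ hne l
    by_contra hlt
    push_neg at hlt
    exact hne (by
      rw [Finset.prod_eq_zero (Finset.mem_univ l) (fallingFac_zero_of_lt hlt), zero_mul])
  -- Step 2: change of variables c = d + r
  have step2 : ∑ c ∈ (countVectors n).filter (fun c => ∀ l, r l ≤ c l),
      (∏ l, fallingFac (c l : ℝ) (r l)) * gibbsSampling α V n c
      = ∑ d ∈ D, (∏ l, fallingFac ((d l + r l : ℕ) : ℝ) (r l)) *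
          gibbsSampling α V n (fun l => d l + r l) := by
    refine Finset.sum_nbij' (fun c l => c l - r l) (fun d l => d l + r l) ?_ ?_ ?_ ?_ ?_
    · intro c hc
      obtain ⟨hc1, hc2⟩ := Finset.mem_filter.1 hc
      obtain ⟨hpi, hsum⟩ := Finset.mem_filter.1 hc1
      rw [Fintype.mem_piFinset] at hpi
      refine Finset.mem_filter.2 ⟨?_, ?_⟩
      · rw [Fintype.mem_piFinset]
        intro i
        rw [Finset.mem_range]
        have := Finset.mem_range.1 (hpi i)
        show c i - r i < n + 1
        omega
      · have key : ∀ i : Fin n, (i.1 + 1) * (c i - r i) + (i.1 + 1) * r i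
            = (i.1 + 1) * c i := by
          intro i
          rw [← Nat.mul_add]
          congr 1
          have := hc2 i
          omega
        have hadd : (∑ i, (i.1 + 1) * (c i - r i)) + ∑ i, (i.1 + 1) * r i
            = ∑ i, (i.1 + 1) * c i := by
          rw [← Finset.sum_add_distrib]
          exact Finset.sum_congr rfl fun i _ => key i
        show ∑ i, (i.1 + 1) * (c i - r i) = m
        omega
    · intro d hd
      obtain ⟨hpi, hsum⟩ := Finset.mem_filter.1 hd
      have hadd : (∑ i, (i.1 + 1) * (d i + r i))
          = (∑ i, (i.1 + 1) * d i) + ∑ i, (i.1 + 1) * r i := by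
        rw [← Finset.sum_add_distrib]
        exact Finset.sum_congr rfl fun i _ => Nat.mul_add _ _ _
      have hsumn : ∑ i, (i.1 + 1) * (d i + r i) = n := by omega
      refine Finset.mem_filter.2 ⟨Finset.mem_filter.2 ⟨?_, hsumn⟩, fun l => Nat.le_add_left _ _⟩
      rw [Fintype.mem_piFinset]
      intro i
      rw [Finset.mem_range]
      have h1 : (i.1 + 1) * (d i + r i) ≤ ∑ i', (i'.1 + 1) * (d i' + r i') :=
        Finset.single_le_sum (f := fun i' => (i'.1 + 1) * (d i' + r i'))
          (fun _ _ => Nat.zero_le _) (Finset.mem_univ i)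
      have h2 : d i + r i ≤ (i.1 + 1) * (d i + r i) :=
        Nat.le_mul_of_pos_left _ (Nat.succ_pos _)
      show d i + r i < n + 1
      omega
    · intro c hc
      obtain ⟨-, hc2⟩ := Finset.mem_filter.1 hc
      funext l
      have := hc2 l
      show c l - r l + r l = c l
      omega
    · intro d hd
      funext l
      show d l + r l - r l = d l
      omega
    · intro c hc
      obtain ⟨-, hc2⟩ := Finset.mem_filter.1 hc
      have h1 : ∀ x, c x - r x + r x = c x := fun x => by have := hc2 x; omega
      simp only [h1]
  -- Step 3: per-term algebra after the change of variables
  have step3 : ∀ d : Fin n → ℕ,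
      (∏ l, fallingFac ((d l + r l : ℕ) : ℝ) (r l)) *
          gibbsSampling α V n (fun l => d l + r l)
      = ((Nat.factorial n : ℝ) *
          ∏ l, (risingFac (1 - α) l.1) ^ (r l) / (Nat.factorial (l.1 + 1) : ℝ) ^ (r l)) *
        (V n ((∑ i, d i) + ρ) *
          ∏ l, (risingFac (1 - α) l.1) ^ (d l) /
            ((Nat.factorial (l.1 + 1) : ℝ) ^ (d l) * ((d l).factorial : ℝ))) := by
    intro d
    have hPQ : (∏ l, fallingFac ((d l + r l : ℕ) : ℝ) (r l)) *
        (∏ l, (risingFac (1 - α) l.1) ^ (d l + r l) /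
          ((Nat.factorial (l.1 + 1) : ℝ) ^ (d l + r l) * ((d l + r l).factorial : ℝ)))
        = (∏ l, (risingFac (1 - α) l.1) ^ (r l) / (Nat.factorial (l.1 + 1) : ℝ) ^ (r l)) *
          (∏ l, (risingFac (1 - α) l.1) ^ (d l) /
            ((Nat.factorial (l.1 + 1) : ℝ) ^ (d l) * ((d l).factorial : ℝ))) := by
      rw [← Finset.prod_mul_distrib, ← Finset.prod_mul_distrib]
      exact Finset.prod_congr rfl fun l _ =>
        term_combine _ _ (Nat.cast_ne_zero.2 (Nat.factorial_ne_zero _)) (d l) (r l)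
    simp only [gibbsSampling]
    rw [show (∑ i, (d i + r i)) = (∑ i, d i) + ρ from by
      rw [hρ]; exact Finset.sum_add_distrib]
    linear_combination ((Nat.factorial n : ℝ) * V n ((∑ i, d i) + ρ)) * hPQ
  have step3' : ∑ d ∈ D, (∏ l, fallingFac ((d l + r l : ℕ) : ℝ) (r l)) *
        gibbsSampling α V n (fun l => d l + r l)
      = ((Nat.factorial n : ℝ) *
          ∏ l, (risingFac (1 - α) l.1) ^ (r l) / (Nat.factorial (l.1 + 1) : ℝ) ^ (r l)) *
        ∑ d ∈ D, V n ((∑ i, d i) + ρ) *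
          ∏ l, (risingFac (1 - α) l.1) ^ (d l) /
            ((Nat.factorial (l.1 + 1) : ℝ) ^ (d l) * ((d l).factorial : ℝ)) := by
    rw [Finset.mul_sum]
    exact Finset.sum_congr rfl fun d _ => step3 d
  -- Step 4: group by the number of blocks
  have hmaps : ∀ d ∈ D, (∑ i, d i) ∈ Finset.range (m + 1) := by
    intro d hd
    obtain ⟨-, hsum⟩ := Finset.mem_filter.1 hd
    rw [Finset.mem_range]
    have : (∑ i, d i) ≤ ∑ i, (i.1 + 1) * d i :=
      Finset.sum_le_sum fun i _ => Nat.le_mul_of_pos_left _ (Nat.succ_pos _)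
    omega
  have step4 : ∑ d ∈ D, V n ((∑ i, d i) + ρ) *
        ∏ l, (risingFac (1 - α) l.1) ^ (d l) /
          ((Nat.factorial (l.1 + 1) : ℝ) ^ (d l) * ((d l).factorial : ℝ))
      = ∑ j ∈ Finset.range (m + 1), V n (j + ρ) *
          ∑ d ∈ D.filter (fun d => ∑ i, d i = j),
            ∏ l, (risingFac (1 - α) l.1) ^ (d l) /
              ((Nat.factorial (l.1 + 1) : ℝ) ^ (d l) * ((d l).factorial : ℝ)) := by
    rw [← Finset.sum_fiberwise_of_maps_to hmaps]
    refine Finset.sum_congr rfl fun j _ => ?_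
    rw [Finset.mul_sum]
    refine Finset.sum_congr rfl fun d hd => ?_
    obtain ⟨-, hdj⟩ := Finset.mem_filter.1 hd
    rw [hdj]
  -- Step 5: identify the fiber sums with generalized Stirling numbers
  have hmf : ((m.factorial : ℝ)) ≠ 0 := Nat.cast_ne_zero.2 (Nat.factorial_ne_zero _)
  have step5 : ∀ j : ℕ, (∑ d ∈ D.filter (fun d => ∑ i, d i = j),
        ∏ l, (risingFac (1 - α) l.1) ^ (d l) /
          ((Nat.factorial (l.1 + 1) : ℝ) ^ (d l) * ((d l).factorial : ℝ)))
      = genStirling α m j / (m.factorial : ℝ) := by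
    intro j
    rw [eq_div_iff hmf, genStirling_eq_s6 α hn hmn j, hD, Finset.filter_filter]
    exact mul_comm _ _
  -- reindex the RHS sum
  have hIcc : ∑ k ∈ Finset.Icc ρ (ρ + m), V n k * genStirling α m (k - ρ)
      = ∑ j ∈ Finset.range (m + 1), V n (j + ρ) * genStirling α m j := by
    refine Finset.sum_nbij' (fun k => k - ρ) (fun j => ρ + j) ?_ ?_ ?_ ?_ ?_
    · intro k hk
      rw [Finset.mem_Icc] at hk
      rw [Finset.mem_range]
      show k - ρ < m + 1
      omega
    · intro j hj
      rw [Finset.mem_range] at hj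
      rw [Finset.mem_Icc]
      show ρ ≤ ρ + j ∧ ρ + j ≤ ρ + m
      omega
    · intro k hk
      rw [Finset.mem_Icc] at hk
      show ρ + (k - ρ) = k
      omega
    · intro j _
      show ρ + j - ρ = j
      omega
    · intro k hk
      rw [Finset.mem_Icc] at hk
      show V n k * genStirling α m (k - ρ) = V n (k - ρ + ρ) * genStirling α m (k - ρ)
      rw [show k - ρ + ρ = k from by omega]
  rw [step1, step2, step3', step4, hIcc]
  simp only [step5]
  rw [Finset.prod_div_distrib, Finset.mul_sum, Finset.mul_sum]
  refine Finset.sum_congr rfl fun j _ => ?_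
  ring
end

section
/- Fix integers n, j, m ≥ 1 with j ≤ n, a composition (n_1,…,n_j) of n into j positive parts, a real α < 1, and real weights V(n,k) with V(n,j) ≠ 0. Fix k ∈ {1,…,m} and positive integers (s_1,…,s_k) with s = ∑_{i=1}^{k} s_i ≤ m. Then summing the full conditional distribution over all old-block allocations gives: ∑ q(m_1,…,m_j; s_1,…,s_k; k) = m!/(s_1!⋯s_k!·k!·(m−s)!)·(V(n+m,j+k)/V(n,j))·(n−jα)_{m−s}·∏_{i=1}^{k} (1−α)_{s_i−1}, where the sum ranges over all tuples (m_1,…,m_j) of nonnegative integers with ∑_{i=1}^{j} m_i = m − s. -/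
/-- The full conditional distribution weight
`q(m_1,…,m_j; s_1,…,s_k; k) = m!/(∏ s_i!·k!·∏ m_i!)·(V(n+m,j+k)/V(n,j))·
∏_i (n_i−α)_{m_i}·∏_i (1−α)_{s_i−1}`. -/
noncomputable def condFull (α : ℝ) (V : ℕ → ℕ → ℝ) (n j m : ℕ) (nv : Fin j → ℕ)
    (k : ℕ) (mv : Fin j → ℕ) (sv : Fin k → ℕ) : ℝ :=
  (Nat.factorial m : ℝ) /
      ((∏ i, (Nat.factorial (sv i) : ℝ)) * (Nat.factorial k : ℝ) *
        ∏ i, (Nat.factorial (mv i) : ℝ)) *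
    (V (n + m) (j + k) / V n j) *
    (∏ i, risingFac ((nv i : ℝ) - α) (mv i)) *
    ∏ i, risingFac (1 - α) (sv i - 1)

open Finset Polynomial

lemma mem_wc {M k : ℕ} {f : Fin k → ℕ} : f ∈ weakCompositions M k ↔ ∑ i, f i = M := by
  simp only [weakCompositions, mem_filter, Fintype.mem_piFinset, mem_range, Nat.lt_succ_iff,
    and_iff_right_iff_imp]
  intro h i
  exact h ▸ Finset.single_le_sum (fun _ _ => Nat.zero_le _) (mem_univ i)

lemma risingFac_eq (x : ℝ) (n : ℕ) :
    risingFac x n = (-1 : ℝ) ^ n * (descPochhammer ℤ n).smeval (-x) := by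
  induction n with
  | zero => simp [risingFac, descPochhammer_zero]
  | succ n ih =>
    rw [risingFac, Finset.prod_range_succ, ← risingFac, ih, descPochhammer_succ_right,
      smeval_mul, smeval_sub, smeval_X, smeval_natCast]
    ring

lemma vand2 (x y : ℝ) (M : ℕ) :
    risingFac (x + y) M
      = ∑ a ∈ Finset.range (M + 1), (M.choose a : ℝ) * risingFac x a * risingFac y (M - a) := by
  have h := Ring.descPochhammer_smeval_add (R := ℝ) (r := -x) (s := -y) M (Commute.all _ _)
  rw [Finset.Nat.sum_antidiagonal_eq_sum_range_succ_mk] at h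
  have hxy : -x + -y = -(x + y) := by ring
  rw [hxy] at h
  rw [risingFac_eq, h, Finset.mul_sum]
  refine Finset.sum_congr rfl fun a ha => ?_
  have ha' : a ≤ M := Nat.lt_succ_iff.mp (Finset.mem_range.mp ha)
  have hpow : (-1 : ℝ) ^ M = (-1) ^ a * (-1) ^ (M - a) := by
    rw [← pow_add, Nat.add_sub_cancel' ha']
  rw [risingFac_eq x, risingFac_eq y, hpow]
  ring

lemma wc_succ (M j : ℕ) (F : (Fin (j + 1) → ℕ) → ℝ) :
    ∑ mv ∈ weakCompositions M (j + 1), F mv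
      = ∑ a ∈ Finset.range (M + 1), ∑ g ∈ weakCompositions (M - a) j, F (Fin.cons a g) := by
  rw [show (∑ a ∈ Finset.range (M + 1), ∑ g ∈ weakCompositions (M - a) j, F (Fin.cons a g))
      = ∑ p ∈ (Finset.range (M + 1)).sigma (fun a => weakCompositions (M - a) j),
          F (Fin.cons p.1 p.2) from Finset.sum_sigma' _ _ _]
  refine Finset.sum_nbij' (fun mv => ⟨mv 0, Fin.tail mv⟩) (fun p => Fin.cons p.1 p.2)
    ?_ ?_ ?_ ?_ ?_
  · intro mv hmv
    have h := mem_wc.mp hmv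
    rw [Fin.sum_univ_succ] at h
    refine Finset.mem_sigma.mpr ⟨Finset.mem_range.mpr (Nat.lt_succ_of_le ?_), mem_wc.mpr ?_⟩
    · show mv 0 ≤ M
      omega
    · show ∑ i : Fin j, Fin.tail mv i = M - mv 0
      have ht : ∑ i : Fin j, Fin.tail mv i = ∑ i : Fin j, mv i.succ := rfl
      rw [ht]
      omega
  · intro p hp
    obtain ⟨h1, h2⟩ := Finset.mem_sigma.mp hp
    have h1' := Nat.lt_succ_iff.mp (Finset.mem_range.mp h1)
    have h2' := mem_wc.mp h2
    refine mem_wc.mpr ?_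
    simp only [Fin.sum_univ_succ, Fin.cons_zero, Fin.cons_succ]
    omega
  · intro mv _
    exact Fin.cons_self_tail mv
  · intro p _
    simp [Fin.tail_cons]
  · intro mv _
    rw [Fin.cons_self_tail]

lemma mvand : ∀ (j M : ℕ) (x : Fin j → ℝ),
    ∑ mv ∈ weakCompositions M j,
        ((M.factorial : ℝ) / ∏ i, ((mv i).factorial : ℝ)) * ∏ i, risingFac (x i) (mv i)
      = risingFac (∑ i, x i) M := by
  intro j
  induction j with
  | zero =>
    intro M x
    rw [show (∑ i : Fin 0, x i) = 0 from rfl]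
    cases M with
    | zero =>
      have hmem : (default : Fin 0 → ℕ) ∈ weakCompositions 0 0 := mem_wc.mpr rfl
      have hset : weakCompositions 0 0 = {default} :=
        Finset.eq_singleton_iff_unique_mem.mpr ⟨hmem, fun y _ => Subsingleton.elim y default⟩
      simp [hset, risingFac]
    | succ M =>
      have hset : weakCompositions (M + 1) 0 = ∅ := by
        refine Finset.eq_empty_of_forall_notMem fun f hf => ?_
        have := mem_wc.mp hf
        simp at this
      rw [hset, Finset.sum_empty, risingFac]
      rw [eq_comm, Finset.prod_eq_zero (Finset.mem_range.mpr (Nat.succ_pos M))]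
      norm_num
  | succ j ih =>
    intro M x
    rw [wc_succ]
    have key : ∀ a ∈ Finset.range (M + 1),
        (∑ g ∈ weakCompositions (M - a) j,
          ((M.factorial : ℝ) / ∏ i : Fin (j+1), (((Fin.cons a g : Fin (j+1) → ℕ) i).factorial : ℝ)) *
            ∏ i : Fin (j+1), risingFac (x i) ((Fin.cons a g : Fin (j+1) → ℕ) i))
        = (M.choose a : ℝ) * risingFac (x 0) a *
            risingFac (∑ i : Fin j, x i.succ) (M - a) := by
      intro a ha
      have ha' : a ≤ M := Nat.lt_succ_iff.mp (Finset.mem_range.mp ha)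
      rw [← ih (M - a) (fun i => x i.succ), Finset.mul_sum]
      refine Finset.sum_congr rfl fun g hg => ?_
      rw [Fin.prod_univ_succ, Fin.prod_univ_succ]
      simp only [Fin.cons_zero, Fin.cons_succ]
      have hfac : (M.factorial : ℝ) = (M.choose a : ℝ) * (a.factorial : ℝ) * ((M - a).factorial : ℝ) := by
        rw [← Nat.cast_mul, ← Nat.cast_mul, Nat.choose_mul_factorial_mul_factorial ha']
      rw [hfac]
      have h1 : ((a.factorial : ℝ)) ≠ 0 := Nat.cast_ne_zero.mpr (Nat.factorial_ne_zero a)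
      have h2 : (∏ i : Fin j, ((g i).factorial : ℝ)) ≠ 0 :=
        Finset.prod_ne_zero_iff.mpr fun i _ => Nat.cast_ne_zero.mpr (Nat.factorial_ne_zero _)
      field_simp
    rw [Finset.sum_congr rfl key, ← vand2 (x 0) (∑ i : Fin j, x i.succ) M, Fin.sum_univ_succ]


/-- Summing the full conditional distribution over old-block allocations. -/
theorem condFull_sum_old_allocations (n j m : ℕ) (hn : 1 ≤ n) (hj : 1 ≤ j) (hm : 1 ≤ m)
    (hjn : j ≤ n) (nv : Fin j → ℕ) (hnv : ∀ i, 0 < nv i) (hsum : ∑ i, nv i = n)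
    (α : ℝ) (hα : α < 1) (V : ℕ → ℕ → ℝ) (hV : V n j ≠ 0)
    (k : ℕ) (hk1 : 1 ≤ k) (hkm : k ≤ m)
    (sv : Fin k → ℕ) (hsv : ∀ i, 0 < sv i) (hs : ∑ i, sv i ≤ m) :
    ∑ mv ∈ weakCompositions (m - ∑ i, sv i) j, condFull α V n j m nv k mv sv =
      (Nat.factorial m : ℝ) /
          ((∏ i, (Nat.factorial (sv i) : ℝ)) * (Nat.factorial k : ℝ) *
            (Nat.factorial (m - ∑ i, sv i) : ℝ)) *
        (V (n + m) (j + k) / V n j) * risingFac ((n : ℝ) - j * α) (m - ∑ i, sv i) *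
        ∏ i, risingFac (1 - α) (sv i - 1) := by
  set M := m - ∑ i, sv i with hM
  have hxsum : ∑ i : Fin j, ((nv i : ℝ) - α) = (n : ℝ) - j * α := by
    rw [Finset.sum_sub_distrib]
    simp only [Finset.sum_const, Finset.card_univ, Fintype.card_fin, nsmul_eq_mul]
    congr 1
    rw [← Nat.cast_sum, hsum]
  have key := mvand j M (fun i => (nv i : ℝ) - α)
  rw [hxsum] at key
  rw [← key, Finset.mul_sum, Finset.sum_mul]
  refine Finset.sum_congr rfl fun mv hmv => ?_
  have hs1 : (∏ i, (Nat.factorial (sv i) : ℝ)) ≠ 0 :=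
    Finset.prod_ne_zero_iff.mpr fun i _ => Nat.cast_ne_zero.mpr (Nat.factorial_ne_zero _)
  have hs2 : ((Nat.factorial k : ℝ)) ≠ 0 := Nat.cast_ne_zero.mpr (Nat.factorial_ne_zero _)
  have hs3 : (∏ i, (Nat.factorial (mv i) : ℝ)) ≠ 0 :=
    Finset.prod_ne_zero_iff.mpr fun i _ => Nat.cast_ne_zero.mpr (Nat.factorial_ne_zero _)
  have hs4 : ((Nat.factorial M : ℝ)) ≠ 0 := Nat.cast_ne_zero.mpr (Nat.factorial_ne_zero _)
  rw [condFull]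
  field_simp
end

section
/- Fix integers n, j, m ≥ 1 with j ≤ n, a composition (n_1,…,n_j) of n into j positive parts, a real α < 1, and real weights V(n,k) with V(n,j) ≠ 0. Let r, k be integers with 1 ≤ r ≤ k ≤ m and let s_1,…,s_r be positive integers with σ = ∑_{i=1}^{r} s_i and σ + (k−r) ≤ m. Then the r-dimensional marginal of the conditional multivariate Gibbs distribution satisfies: ∑ P(s_1,…,s_k; k) = [m!·∏_{i=1}^{r} (1−α)_{s_i−1}/(s_1!⋯s_r!·(m−σ)!)]·((k−r)!/k!)·(V(n+m,j+k)/V(n,j))·S(m−σ, k−r; α, −(n−jα)), where the sum ranges over all tuples (s_{r+1},…,s_k) of positive integers with ∑_{i=1}^{k} s_i ≤ m. -/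
/-- The conditional multivariate Gibbs distribution weight
`P(s_1,…,s_k;k) = m!/(s_1!⋯s_k!·k!·(m−s)!)·(V(n+m,j+k)/V(n,j))·(n−jα)_{m−s}·
∏_i (1−α)_{s_i−1}`, where `s = ∑ s_i`. -/
noncomputable def condMulti (α : ℝ) (V : ℕ → ℕ → ℝ) (n j m : ℕ) (k : ℕ)
    (sv : Fin k → ℕ) : ℝ :=
  (Nat.factorial m : ℝ) /
      ((∏ i, (Nat.factorial (sv i) : ℝ)) * (Nat.factorial k : ℝ) *
        (Nat.factorial (m - ∑ i, sv i) : ℝ)) *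
    (V (n + m) (j + k) / V n j) * risingFac ((n : ℝ) - j * α) (m - ∑ i, sv i) *
    ∏ i, risingFac (1 - α) (sv i - 1)

lemma append_prod {M : Type*} [CommMonoid M] {r q k : ℕ} (e : k = r + q)
    (u : Fin r → ℕ) (v : Fin q → ℕ) (h : ℕ → M) :
    ∏ i, h (Fin.append u v (Fin.cast e i)) = (∏ i, h (u i)) * ∏ i, h (v i) := by
  have h1 : ∏ i, h (Fin.append u v (Fin.cast e i)) = ∏ i : Fin (r+q), h (Fin.append u v i) :=
    Fintype.prod_equiv (finCongr e) _ _ (fun i => rfl)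
  rw [h1, Fin.prod_univ_add]
  simp [Fin.append_left, Fin.append_right]

lemma append_sum {r q k : ℕ} (e : k = r + q) (u : Fin r → ℕ) (v : Fin q → ℕ) :
    ∑ i, Fin.append u v (Fin.cast e i) = (∑ i, u i) + ∑ i, v i := by
  have h1 : ∑ i, Fin.append u v (Fin.cast e i) = ∑ i : Fin (r+q), Fin.append u v i :=
    Fintype.sum_equiv (finCongr e) _ _ (fun i => rfl)
  rw [h1, Fin.sum_univ_add]
  simp [Fin.append_left, Fin.append_right]

set_option maxHeartbeats 2000000 in
set_option maxHeartbeats 2000000 in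
/-- The `r`-dimensional marginal of the conditional multivariate Gibbs distribution. -/
theorem condMulti_marginal (n j m : ℕ) (hn : 1 ≤ n) (hj : 1 ≤ j) (hm : 1 ≤ m)
    (hjn : j ≤ n) (nv : Fin j → ℕ) (hnv : ∀ i, 0 < nv i) (hsum : ∑ i, nv i = n)
    (α : ℝ) (hα : α < 1) (V : ℕ → ℕ → ℝ) (hV : V n j ≠ 0)
    (r k : ℕ) (hr : 1 ≤ r) (hrk : r ≤ k) (hkm : k ≤ m)
    (sv : Fin r → ℕ) (hsv : ∀ i, 0 < sv i) (hσ : ∑ i, sv i + (k - r) ≤ m) :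
    ∑ g ∈ (Fintype.piFinset fun _ : Fin (k - r) => Finset.Icc 1 m).filter
        (fun g => ∑ i, sv i + ∑ i, g i ≤ m),
        condMulti α V n j m k
          (fun i => Fin.append sv g (Fin.cast (show k = r + (k - r) by omega) i)) =
      (Nat.factorial m : ℝ) * (∏ i, risingFac (1 - α) (sv i - 1)) /
          ((∏ i, (Nat.factorial (sv i) : ℝ)) * (Nat.factorial (m - ∑ i, sv i) : ℝ)) *
        ((Nat.factorial (k - r) : ℝ) / (Nat.factorial k : ℝ)) *
        (V (n + m) (j + k) / V n j) *
        genStirlingNC α (-((n : ℝ) - j * α)) (m - ∑ i, sv i) (k - r) := by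
  classical
  have e : k = r + (k - r) := by omega
  set q := k - r with hqdef
  set σ := ∑ i, sv i with hσdef
  set M := m - σ with hMdef
  set S := (Fintype.piFinset fun _ : Fin q => Finset.Icc 1 m).filter
      (fun g => σ + ∑ i, g i ≤ m) with hSdef
  have hσm : σ + q ≤ m := hσ
  -- every g in S has sum in Icc q M
  have hmaps : ∀ g ∈ S, (∑ i, g i) ∈ Finset.Icc q M := by
    intro g hg
    rw [hSdef, Finset.mem_filter, Fintype.mem_piFinset] at hg
    obtain ⟨hg1, hg2⟩ := hg
    simp only [Finset.mem_Icc] at hg1 ⊢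
    constructor
    · calc q = ∑ _i : Fin q, 1 := by simp
        _ ≤ ∑ i, g i := Finset.sum_le_sum (fun i _ => (hg1 i).1)
    · omega
  -- fibers are compositions
  have hfiber : ∀ t ∈ Finset.Icc q M,
      S.filter (fun g => ∑ i, g i = t) = compositions t q := by
    intro t ht
    simp only [Finset.mem_Icc] at ht
    ext g
    simp only [hSdef, compositions, Finset.mem_filter, Fintype.mem_piFinset,
      Finset.mem_Icc, Finset.mem_range]
    constructor
    · rintro ⟨⟨hg1, hg2⟩, hg3⟩
      refine ⟨fun i => ?_, fun i => (hg1 i).1, hg3⟩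
      have := Finset.single_le_sum (f := g) (fun i _ => Nat.zero_le _) (Finset.mem_univ i)
      omega
    · rintro ⟨hg1, hg2, hg3⟩
      have hle : ∀ i, g i ≤ t := by
        intro i
        have := Finset.single_le_sum (f := g) (fun i _ => Nat.zero_le _) (Finset.mem_univ i)
        omega
      exact ⟨⟨fun i => ⟨hg2 i, by have := hle i; omega⟩, by omega⟩, hg3⟩
  -- term rewriting on compositions
  have hterm : ∀ t ∈ Finset.Icc q M, ∀ g ∈ compositions t q,
      condMulti α V n j m k (fun i => Fin.append sv g (Fin.cast e i)) =
      ((Nat.factorial m : ℝ) / ((∏ i, (Nat.factorial (sv i) : ℝ)) *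
          (Nat.factorial k : ℝ) * (Nat.factorial (M - t) : ℝ)) *
        (V (n + m) (j + k) / V n j) * risingFac ((n : ℝ) - j * α) (M - t) *
        ∏ i, risingFac (1 - α) (sv i - 1)) *
        ∏ i, (risingFac (1 - α) (g i - 1) / (Nat.factorial (g i) : ℝ)) := by
    intro t ht g hg
    simp only [Finset.mem_Icc] at ht
    have hgt : ∑ i, g i = t := by
      simp only [compositions, Finset.mem_filter] at hg
      exact hg.2.2
    have hMt : m - (σ + t) = M - t := by omega
    rw [condMulti, append_sum e sv g,
      append_prod e sv g (fun x => (Nat.factorial x : ℝ)),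
      append_prod e sv g (fun x => risingFac (1 - α) (x - 1)),
      hgt, ← hσdef, hMt, Finset.prod_div_distrib]
    ring
  rw [← Finset.sum_fiberwise_of_maps_to hmaps]
  rw [Finset.sum_congr rfl (fun t ht => by
    rw [hfiber t ht, Finset.sum_congr rfl (hterm t ht), ← Finset.mul_sum])]
  -- now handle the RHS
  rw [genStirlingNC, neg_neg, Finset.mul_sum]
  refine Finset.sum_congr rfl (fun t ht => ?_)
  simp only [Finset.mem_Icc] at ht
  rw [genStirling]
  simp only [← hqdef]
  set T := ∑ f ∈ compositions t q, ∏ i, risingFac (1 - α) (f i - 1) / (Nat.factorial (f i) : ℝ)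
    with hTdef
  have hch : ((M.choose t : ℕ) : ℝ) * (Nat.factorial t : ℝ) * (Nat.factorial (M - t) : ℝ)
      = (Nat.factorial M : ℝ) := by
    rw [← Nat.cast_mul, ← Nat.cast_mul, Nat.choose_mul_factorial_mul_factorial ht.2]
  have h1 : (Nat.factorial (M - t) : ℝ) ≠ 0 := Nat.cast_ne_zero.2 (Nat.factorial_ne_zero _)
  have h2 : (Nat.factorial t : ℝ) ≠ 0 := Nat.cast_ne_zero.2 (Nat.factorial_ne_zero _)
  have h3 : (Nat.factorial M : ℝ) ≠ 0 := Nat.cast_ne_zero.2 (Nat.factorial_ne_zero _)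
  have h4 : (Nat.factorial k : ℝ) ≠ 0 := Nat.cast_ne_zero.2 (Nat.factorial_ne_zero _)
  have h5 : (Nat.factorial q : ℝ) ≠ 0 := Nat.cast_ne_zero.2 (Nat.factorial_ne_zero _)
  have h6 : ((M.choose t : ℕ) : ℝ) ≠ 0 :=
    Nat.cast_ne_zero.2 (Nat.choose_pos ht.2).ne'
  rw [← hch]
  field_simp
end
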